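/- Let M = [[w, y, x],[z, w+α(u,v), y+β(u,v)]] with α, β ∈ (u,v)^2 ⊂ ℂ[[u,v]]. Then the scheme defined by the 2×2 minors of M in ℂ[[x,y,z,w,u,v]] has singular locus defined by the ideal (x, y, z, w, α, β); in particular M defines an isolated singularity if and only if (α, β) defines a fat point in the (u,v)-plane, i.e. ℂ[[u,v]]/(α,β) is finite-dimensional over ℂ. -/

import Mathlib

open MvPolynomial Matrix

private lemma minor_zero {M : Matrix (Fin 3) (Fin 6) ℂ} (h : M.rank < 2) (i j : Fin 3)
    (k l : Fin 6) : M i k * M j l - M i l * M j k = 0 := by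
  by_contra hd
  have li : LinearIndependent ℂ ![M i, M j] := by
    rw [LinearIndependent.pair_iff]
    intro s t hst
    have hk := congrFun hst k
    have hl := congrFun hst l
    simp only [Pi.add_apply, Pi.smul_apply, smul_eq_mul, Pi.zero_apply] at hk hl
    constructor
    · have h1 : s * (M i k * M j l - M i l * M j k) = 0 := by
        linear_combination M j l * hk - M j k * hl
      rcases mul_eq_zero.mp h1 with h' | h'
      · exact h'
      · exact absurd h' hd
    · have h1 : t * (M i k * M j l - M i l * M j k) = 0 := by
        linear_combination M i k * hl - M i l * hk
      rcases mul_eq_zero.mp h1 with h' | h'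
      · exact h'
      · exact absurd h' hd
  have h2 : 2 ≤ M.rank := by
    rw [Matrix.rank_eq_finrank_span_row]
    have hle : Submodule.span ℂ (Set.range ![M i, M j]) ≤ Submodule.span ℂ (Set.range M) := by
      apply Submodule.span_mono
      rintro _ ⟨c, rfl⟩
      fin_cases c
      · exact ⟨i, rfl⟩
      · exact ⟨j, rfl⟩
    calc (2 : ℕ) = Module.finrank ℂ (Submodule.span ℂ (Set.range ![M i, M j])) := by
          rw [finrank_span_eq_card li]; simp
      _ ≤ Module.finrank ℂ (Submodule.span ℂ (Set.range M)) := Submodule.finrank_mono hle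
  omega

private lemma pderiv_rename_zero (q : MvPolynomial (Fin 2) ℂ) (j : Fin 6)
    (hj : ∀ i : Fin 2, (![4, 5] : Fin 2 → Fin 6) i ≠ j) :
    pderiv j (rename ![4, 5] q) = 0 := by
  apply pderiv_eq_zero_of_notMem_vars
  intro hmem
  have := vars_rename _ _ hmem
  simp only [Finset.mem_image] at this
  obtain ⟨i, -, hi⟩ := this
  exact hj i hi

private lemma eval_rename45 (p : Fin 6 → ℂ) (q : MvPolynomial (Fin 2) ℂ) :
    eval p (rename ![4, 5] q) = eval ![p 4, p 5] q := by
  rw [eval_rename]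
  have : p ∘ ![4, 5] = ![p 4, p 5] := by funext i; fin_cases i <;> rfl
  rw [this]


private lemma eval_zero_of_mem_span {α β q₀ : MvPolynomial (Fin 2) ℂ} {x : Fin 2 → ℂ}
    (hq : q₀ ∈ Ideal.span ({α, β} : Set (MvPolynomial (Fin 2) ℂ)))
    (ha : eval x α = 0) (hb : eval x β = 0) : eval x q₀ = 0 := by
  have : Ideal.span ({α, β} : Set (MvPolynomial (Fin 2) ℂ)) ≤ RingHom.ker (eval x) := by
    rw [Ideal.span_le]
    rintro q (rfl | rfl) <;> simpa [RingHom.mem_ker]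
  simpa [RingHom.mem_ker] using this hq

private lemma eval_aeval_X (q : Fin 2 → ℂ) (i : Fin 2) (f : Polynomial ℂ) :
    eval q ((Polynomial.aeval (X i : MvPolynomial (Fin 2) ℂ)) f) = Polynomial.eval (q i) f := by
  have h := Polynomial.aeval_algHom_apply (MvPolynomial.aeval q) (X i : MvPolynomial (Fin 2) ℂ) f
  rw [MvPolynomial.aeval_X] at h
  have e1 : (MvPolynomial.aeval q) ((Polynomial.aeval (X i : MvPolynomial (Fin 2) ℂ)) f) =
      eval q ((Polynomial.aeval (X i : MvPolynomial (Fin 2) ℂ)) f) := rfl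
  rw [← e1, ← h]
  exact congrFun (Polynomial.coe_aeval_eq_eval (q i)) f

private lemma fat_point_iff (α β : MvPolynomial (Fin 2) ℂ) :
    {q : Fin 2 → ℂ | eval q α = 0 ∧ eval q β = 0}.Finite ↔
      FiniteDimensional ℂ (MvPolynomial (Fin 2) ℂ ⧸
        Ideal.span ({α, β} : Set (MvPolynomial (Fin 2) ℂ))) := by
  set Z := {q : Fin 2 → ℂ | eval q α = 0 ∧ eval q β = 0} with hZ
  set I := Ideal.span ({α, β} : Set (MvPolynomial (Fin 2) ℂ)) with hI
  constructor
  · intro hfin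
    have hzl : MvPolynomial.zeroLocus ℂ I = Z := by
      ext q
      simp only [mem_zeroLocus_iff, hZ, Set.mem_setOf_eq, coe_aeval_eq_eval]
      constructor
      · intro h
        exact ⟨h α (Ideal.subset_span (by simp)), h β (Ideal.subset_span (by simp))⟩
      · rintro ⟨ha, hb⟩ p hp
        exact eval_zero_of_mem_span hp ha hb
    have hint : ∀ i : Fin 2, IsIntegral ℂ (Ideal.Quotient.mk I (X i)) := by
      intro i
      set f : Polynomial ℂ := ∏ q ∈ hfin.toFinset, (Polynomial.X - Polynomial.C (q i)) with hf
      have hmon : f.Monic :=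
        Polynomial.monic_prod_of_monic _ _ fun q _ => Polynomial.monic_X_sub_C _
      have hvan : (Polynomial.aeval (X i : MvPolynomial (Fin 2) ℂ)) f ∈
          vanishingIdeal ℂ (MvPolynomial.zeroLocus ℂ I) := by
        intro x hx
        change eval x _ = 0
        rw [eval_aeval_X, hf, Polynomial.eval_prod]
        apply Finset.prod_eq_zero (i := x)
        · rw [Set.Finite.mem_toFinset]
          rw [hzl] at hx
          exact hx
        · simp
      rw [vanishingIdeal_zeroLocus_eq_radical] at hvan
      obtain ⟨n, hn⟩ := Ideal.mem_radical_iff.mp hvan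
      refine ⟨f ^ n, hmon.pow n, ?_⟩
      rw [← Polynomial.aeval_def]
      have h2 := Polynomial.aeval_algHom_apply (Ideal.Quotient.mkₐ ℂ I)
        (X i : MvPolynomial (Fin 2) ℂ) (f ^ n)
      rw [Ideal.Quotient.mkₐ_eq_mk] at h2
      rw [h2, map_pow, Ideal.Quotient.eq_zero_iff_mem.mpr hn]
    have hadj : Algebra.adjoin ℂ
        (Set.range fun i : Fin 2 => Ideal.Quotient.mk I (X i)) = ⊤ := by
      have : (Set.range fun i : Fin 2 => Ideal.Quotient.mk I (X i)) =
          (Ideal.Quotient.mkₐ ℂ I) '' Set.range X := by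
        rw [← Set.range_comp]; rfl
      rw [this, ← AlgHom.map_adjoin, MvPolynomial.adjoin_range_X, Algebra.map_top,
        AlgHom.range_eq_top]
      exact Ideal.Quotient.mkₐ_surjective ℂ I
    have hfg := fg_adjoin_of_finite (Set.finite_range _)
      (by rintro _ ⟨i, rfl⟩; exact hint i)
    rw [hadj] at hfg
    rw [Algebra.top_toSubmodule] at hfg
    exact Module.finite_def.mpr hfg
  · intro h
    have key : ∀ i : Fin 2, ∃ f : Polynomial ℂ, f.Monic ∧
        (Polynomial.aeval (X i : MvPolynomial (Fin 2) ℂ)) f ∈ I := by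
      intro i
      obtain ⟨f, hmonic, hfe⟩ := IsIntegral.of_finite ℂ
        (Ideal.Quotient.mk I (X i : MvPolynomial (Fin 2) ℂ))
      refine ⟨f, hmonic, ?_⟩
      rw [← Ideal.Quotient.eq_zero_iff_mem]
      have h2 := Polynomial.aeval_algHom_apply (Ideal.Quotient.mkₐ ℂ I)
        (X i : MvPolynomial (Fin 2) ℂ) f
      rw [Ideal.Quotient.mkₐ_eq_mk] at h2
      rw [← h2]
      exact hfe
    obtain ⟨f₀, hm₀, hf₀⟩ := key 0
    obtain ⟨f₁, hm₁, hf₁⟩ := key 1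
    have hsub : Z ⊆ (fun q : Fin 2 → ℂ => (q 0, q 1)) ⁻¹'
        ({c : ℂ | Polynomial.eval c f₀ = 0} ×ˢ {c : ℂ | Polynomial.eval c f₁ = 0}) := by
      rintro q ⟨ha, hb⟩
      have h0 : eval q ((Polynomial.aeval (X 0 : MvPolynomial (Fin 2) ℂ)) f₀) = 0 :=
        eval_zero_of_mem_span hf₀ ha hb
      have h1 : eval q ((Polynomial.aeval (X 1 : MvPolynomial (Fin 2) ℂ)) f₁) = 0 :=
        eval_zero_of_mem_span hf₁ ha hb
      rw [eval_aeval_X] at h0 h1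
      exact ⟨h0, h1⟩
    refine Set.Finite.subset (Set.Finite.preimage ?_ ?_) hsub
    · intro q hq q' hq' he
      funext i
      fin_cases i
      · exact congrArg Prod.fst he
      · exact congrArg Prod.snd he
    · exact Set.Finite.prod (Polynomial.finite_setOf_isRoot hm₀.ne_zero)
        (Polynomial.finite_setOf_isRoot hm₁.ne_zero)

private lemma alg_core (x y z w a b : ℂ)
    (E1 : y * (y + b) - x * (w + a) = 0)
    (E3 : w * (w + a) - y * z = 0)
    (m12zw : (0 : ℂ) * (y + b) - -x * -x = 0)
    (m12yw : (y + (y + b)) * (y + b) - -x * w = 0)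
    (m13yz : (y + (y + b)) * -y - (0 : ℂ) * -z = 0)
    (m13xw : -(w + a) * (w + (w + a)) - -x * 0 = 0)
    (m23xy : -z * -z - w * 0 = 0)
    (m23yw : w * (w + (w + a)) - (y + b) * -z = 0) :
    x = 0 ∧ y = 0 ∧ z = 0 ∧ w = 0 ∧ a = 0 ∧ b = 0 := by
  have hx : x = 0 := by
    have h : x ^ 2 = 0 := by linear_combination -m12zw
    exact pow_eq_zero_iff two_ne_zero |>.mp h
  have hz : z = 0 := by
    have h : z ^ 2 = 0 := by linear_combination m23xy
    exact pow_eq_zero_iff two_ne_zero |>.mp h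
  have hy : y = 0 := by
    have h : y ^ 2 = 0 := by linear_combination -m13yz - E1 - (w + a) * hx
    exact pow_eq_zero_iff two_ne_zero |>.mp h
  have hwa : w + a = 0 := by
    have h : (w + a) ^ 2 = 0 := by linear_combination -m13xw - E3 - z * hy
    exact pow_eq_zero_iff two_ne_zero |>.mp h
  have hw : w = 0 := by
    have h : w ^ 2 = 0 := by linear_combination m23yw - w * hwa - (y + b) * hz
    exact pow_eq_zero_iff two_ne_zero |>.mp h
  have ha : a = 0 := by linear_combination hwa - hw
  have hb : b = 0 := by
    have h : b ^ 2 = 0 := by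
      linear_combination m12yw - (2 * y + 3 * b) * hy - w * hx
    exact pow_eq_zero_iff two_ne_zero |>.mp h
  exact ⟨hx, hy, hz, hw, ha, hb⟩

theorem stmt_19 (α β : MvPolynomial (Fin 2) ℂ)
    (hα : α ∈ (Ideal.span ({X 0, X 1} : Set (MvPolynomial (Fin 2) ℂ))) ^ 2)
    (hβ : β ∈ (Ideal.span ({X 0, X 1} : Set (MvPolynomial (Fin 2) ℂ))) ^ 2) :
    let A : MvPolynomial (Fin 6) ℂ := rename ![4, 5] α
    let B : MvPolynomial (Fin 6) ℂ := rename ![4, 5] β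
    let g : Fin 3 → MvPolynomial (Fin 6) ℂ :=
      ![X 1 * (X 1 + B) - X 0 * (X 3 + A),
        X 3 * (X 1 + B) - X 0 * X 2,
        X 3 * (X 3 + A) - X 1 * X 2]
    let singPt : (Fin 6 → ℂ) → Prop := fun p =>
      (∀ i : Fin 3, eval p (g i) = 0) ∧
        (Matrix.of fun (i : Fin 3) (j : Fin 6) => eval p (pderiv j (g i))).rank < 2
    (∀ p : Fin 6 → ℂ,
      singPt p ↔ (p 0 = 0 ∧ p 1 = 0 ∧ p 2 = 0 ∧ p 3 = 0 ∧
        eval ![p 4, p 5] α = 0 ∧ eval ![p 4, p 5] β = 0)) ∧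
    ({p : Fin 6 → ℂ | singPt p}.Finite ↔
      FiniteDimensional ℂ (MvPolynomial (Fin 2) ℂ ⧸
        Ideal.span ({α, β} : Set (MvPolynomial (Fin 2) ℂ)))) := by
  intro A B g singPt
  have hg0 : g 0 = X 1 * (X 1 + B) - X 0 * (X 3 + A) := rfl
  have hg1 : g 1 = X 3 * (X 1 + B) - X 0 * X 2 := rfl
  have hg2 : g 2 = X 3 * (X 3 + A) - X 1 * X 2 := rfl
  have hAdef : A = rename ![4, 5] α := rfl
  have hBdef : B = rename ![4, 5] β := rfl
  have pdA : ∀ j : Fin 6, (∀ i : Fin 2, (![4, 5] : Fin 2 → Fin 6) i ≠ j) → pderiv j A = 0 :=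
    fun j hj => by rw [hAdef]; exact pderiv_rename_zero α j hj
  have pdB : ∀ j : Fin 6, (∀ i : Fin 2, (![4, 5] : Fin 2 → Fin 6) i ≠ j) → pderiv j B = 0 :=
    fun j hj => by rw [hBdef]; exact pderiv_rename_zero β j hj
  have pdA0 : pderiv 0 A = 0 := pdA 0 (by decide)
  have pdA1 : pderiv 1 A = 0 := pdA 1 (by decide)
  have pdA2 : pderiv 2 A = 0 := pdA 2 (by decide)
  have pdA3 : pderiv 3 A = 0 := pdA 3 (by decide)
  have pdB0 : pderiv 0 B = 0 := pdB 0 (by decide)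
  have pdB1 : pderiv 1 B = 0 := pdB 1 (by decide)
  have pdB2 : pderiv 2 B = 0 := pdB 2 (by decide)
  have pdB3 : pderiv 3 B = 0 := pdB 3 (by decide)
  have hevalA : ∀ p : Fin 6 → ℂ, eval p A = eval ![p 4, p 5] α := fun p => by
    rw [hAdef]; exact eval_rename45 p α
  have hevalB : ∀ p : Fin 6 → ℂ, eval p B = eval ![p 4, p 5] β := fun p => by
    rw [hBdef]; exact eval_rename45 p β
  have main : ∀ p : Fin 6 → ℂ,
      singPt p ↔ (p 0 = 0 ∧ p 1 = 0 ∧ p 2 = 0 ∧ p 3 = 0 ∧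
        eval ![p 4, p 5] α = 0 ∧ eval ![p 4, p 5] β = 0) := by
    intro p
    constructor
    · rintro ⟨hgv, hrank⟩
      have key : ∀ (i j : Fin 3) (k l : Fin 6),
          eval p (pderiv k (g i)) * eval p (pderiv l (g j)) -
            eval p (pderiv l (g i)) * eval p (pderiv k (g j)) = 0 := by
        intro i j k l
        simpa using minor_zero hrank i j k l
      -- entry values
      have J00 : eval p (pderiv 0 (g 0)) = -(p 3 + eval p A) := by
        rw [hg0]; simp [pderiv_mul, pderiv_X, pdA0, pdB0] <;> ring
      have J01 : eval p (pderiv 1 (g 0)) = p 1 + (p 1 + eval p B) := by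
        rw [hg0]; simp [pderiv_mul, pderiv_X, pdA1, pdB1] <;> ring
      have J02 : eval p (pderiv 2 (g 0)) = 0 := by
        rw [hg0]; simp [pderiv_mul, pderiv_X, pdA2, pdB2] <;> ring
      have J03 : eval p (pderiv 3 (g 0)) = -(p 0) := by
        rw [hg0]; simp [pderiv_mul, pderiv_X, pdA3, pdB3] <;> ring
      have J10 : eval p (pderiv 0 (g 1)) = -(p 2) := by
        rw [hg1]; simp [pderiv_mul, pderiv_X, pdA0, pdB0] <;> ring
      have J11 : eval p (pderiv 1 (g 1)) = p 3 := by
        rw [hg1]; simp [pderiv_mul, pderiv_X, pdA1, pdB1] <;> ring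
      have J12 : eval p (pderiv 2 (g 1)) = -(p 0) := by
        rw [hg1]; simp [pderiv_mul, pderiv_X, pdA2, pdB2] <;> ring
      have J13 : eval p (pderiv 3 (g 1)) = p 1 + eval p B := by
        rw [hg1]; simp [pderiv_mul, pderiv_X, pdA3, pdB3] <;> ring
      have J20 : eval p (pderiv 0 (g 2)) = 0 := by
        rw [hg2]; simp [pderiv_mul, pderiv_X, pdA0, pdB0] <;> ring
      have J21 : eval p (pderiv 1 (g 2)) = -(p 2) := by
        rw [hg2]; simp [pderiv_mul, pderiv_X, pdA1, pdB1] <;> ring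
      have J22 : eval p (pderiv 2 (g 2)) = -(p 1) := by
        rw [hg2]; simp [pderiv_mul, pderiv_X, pdA2, pdB2] <;> ring
      have J23 : eval p (pderiv 3 (g 2)) = p 3 + (p 3 + eval p A) := by
        rw [hg2]; simp [pderiv_mul, pderiv_X, pdA3, pdB3] <;> ring
      have E1 : p 1 * (p 1 + eval p B) - p 0 * (p 3 + eval p A) = 0 := by
        have h := hgv 0; rw [hg0] at h; simp at h; linear_combination h
      have E3 : p 3 * (p 3 + eval p A) - p 1 * p 2 = 0 := by
        have h := hgv 2; rw [hg2] at h; simp at h; linear_combination h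
      have m12zw := key 0 1 2 3; rw [J02, J13, J03, J12] at m12zw
      have m12yw := key 0 1 1 3; rw [J01, J13, J03, J11] at m12yw
      have m13yz := key 0 2 1 2; rw [J01, J22, J02, J21] at m13yz
      have m13xw := key 0 2 0 3; rw [J00, J23, J03, J20] at m13xw
      have m23xy := key 1 2 0 1; rw [J10, J21, J11, J20] at m23xy
      have m23yw := key 1 2 1 3; rw [J11, J23, J13, J21] at m23yw
      obtain ⟨hx, hy, hz, hw, ha, hb⟩ :=
        alg_core (p 0) (p 1) (p 2) (p 3) (eval p A) (eval p B) E1 E3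
          (by linear_combination m12zw) (by linear_combination m12yw)
          (by linear_combination m13yz) (by linear_combination m13xw)
          (by linear_combination m23xy) (by linear_combination m23yw)
      exact ⟨hx, hy, hz, hw, by rw [← hevalA p]; exact ha, by rw [← hevalB p]; exact hb⟩
    · rintro ⟨h0, h1, h2, h3, ha, hb⟩
      have hA0 : eval p A = 0 := by rw [hevalA p]; exact ha
      have hB0 : eval p B = 0 := by rw [hevalB p]; exact hb
      constructor
      · intro i
        fin_cases i <;> simp [hg0, hg1, hg2, h0, h1, h3]
      · have hM : (Matrix.of fun (i : Fin 3) (j : Fin 6) => eval p (pderiv j (g i))) = 0 := by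
          ext i j
          simp only [Matrix.of_apply, Matrix.zero_apply]
          fin_cases i <;> fin_cases j <;>
            simp [hg0, hg1, hg2, pderiv_mul, pderiv_X, pdA0, pdA1, pdA2, pdA3, pdB0, pdB1,
              pdB2, pdB3, h0, h1, h2, h3, hA0, hB0]
        rw [hM, Matrix.rank_zero]
        omega
  refine ⟨main, ?_⟩
  have hq2 : ∀ q : Fin 2 → ℂ, (![q 0, q 1] : Fin 2 → ℂ) = q := fun q => by
    funext i; fin_cases i <;> rfl
  refine Iff.trans ?_ (fat_point_iff α β)
  constructor
  · intro hS
    apply Set.Finite.subset (hS.image fun p => ![p 4, p 5])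
    rintro q ⟨ha, hb⟩
    refine ⟨![0, 0, 0, 0, q 0, q 1], ?_, ?_⟩
    · rw [Set.mem_setOf_eq, main]
      refine ⟨by simp, by simp, by simp, by simp, ?_, ?_⟩
      · have : (![(0:ℂ), 0, 0, 0, q 0, q 1] 4) = q 0 := by simp
        rw [show (![(![(0:ℂ),0,0,0,q 0,q 1]) 4, (![(0:ℂ),0,0,0,q 0,q 1]) 5] : Fin 2 → ℂ) = q by
          funext i; fin_cases i <;> rfl]
        exact ha
      · rw [show (![(![(0:ℂ),0,0,0,q 0,q 1]) 4, (![(0:ℂ),0,0,0,q 0,q 1]) 5] : Fin 2 → ℂ) = q by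
          funext i; fin_cases i <;> rfl]
        exact hb
    · funext i; fin_cases i <;> first | rfl | simp
  · intro hZ
    apply Set.Finite.subset (hZ.image fun q => ![0, 0, 0, 0, q 0, q 1])
    intro p hp
    rw [Set.mem_setOf_eq, main] at hp
    obtain ⟨h0, h1, h2, h3, ha, hb⟩ := hp
    refine ⟨![p 4, p 5], ⟨?_, ?_⟩, ?_⟩
    · exact ha
    · exact hb
    · funext i; fin_cases i <;> first | rfl | simp [h0, h1, h2, h3]
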